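/- arXiv:1802.05245 — 2 statements merged into one kernel-verified Lean document; each statement's English description precedes it below -/
import Mathlib

section
/- Let V(r) = ξ/√r with ξ ≠ 0 and k > 0. Then with the tortoise coordinate r_* = r − (ξ/k²)√r − (ξ²/(8k⁴)) ln r, the function u(r) = exp(i k r_*) = exp(i(kr − (ξ/k)√r − (ξ²/(8k³)) ln r)) satisfies u''(r) + (k² − ξ/√r) u(r) = g(r) u(r) with g(r) = O(r^{−3/2}) as r → ∞. -/
open Real Complex Filter Asymptotics

set_option maxHeartbeats 1600000 in
theorem inv_sqrt_potential_tortoise (ξ k : ℝ) (hξ : ξ ≠ 0) (hk : 0 < k)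
    (rstar : ℝ → ℝ)
    (hrstar : ∀ r, rstar r =
      r - ξ / k ^ 2 * Real.sqrt r - ξ ^ 2 / (8 * k ^ 4) * Real.log r)
    (u : ℝ → ℂ) (hu : ∀ r, u r = Complex.exp (Complex.I * (k : ℂ) * (rstar r : ℂ))) :
    ∃ g : ℝ → ℂ,
      (∀ r : ℝ, 0 < r →
        deriv (deriv u) r + ((k : ℂ) ^ 2 - (ξ : ℂ) / (Real.sqrt r : ℂ)) * u r = g r * u r) ∧
      g =O[atTop] fun r : ℝ => r ^ (-(3 : ℝ) / 2) := by
  have hk0 : (k : ℝ) ≠ 0 := hk.ne'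
  set d : ℝ → ℝ := fun r => 1 - ξ / k ^ 2 * (2 * Real.sqrt r)⁻¹ - ξ ^ 2 / (8 * k ^ 4) * r⁻¹ with hd
  set c1 : ℂ := Complex.I * ξ / (4 * k) - ξ ^ 3 / (8 * k ^ 4) with hc1
  set c2 : ℂ := Complex.I * ξ ^ 2 / (8 * k ^ 3) - ξ ^ 4 / (64 * k ^ 6) with hc2
  refine ⟨fun r => c1 * ((Real.sqrt r : ℂ))⁻¹ ^ 3 + c2 * ((r : ℂ))⁻¹ ^ 2, ?_, ?_⟩
  · intro r hr
    have hs0 : Real.sqrt r ≠ 0 := (Real.sqrt_pos.2 hr).ne'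
    have hrd : ∀ x, 0 < x → HasDerivAt rstar (d x) x := by
      intro x hx
      have h1 : HasDerivAt (fun y => y - ξ / k ^ 2 * Real.sqrt y - ξ ^ 2 / (8 * k ^ 4) * Real.log y)
          (1 - ξ / k ^ 2 * (1 / (2 * Real.sqrt x)) - ξ ^ 2 / (8 * k ^ 4) * x⁻¹) x :=
        ((hasDerivAt_id x).sub (((Real.hasDerivAt_sqrt hx.ne').const_mul _))).sub
          ((Real.hasDerivAt_log hx.ne').const_mul _)
      rw [one_div] at h1
      exact h1.congr_of_eventuallyEq (Filter.Eventually.of_forall fun y => (hrstar y))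
    have hud : ∀ x, 0 < x → HasDerivAt u (Complex.I * k * (d x : ℂ) * u x) x := by
      intro x hx
      have h2 : HasDerivAt (fun y => Complex.I * (k : ℂ) * (rstar y : ℂ))
          (Complex.I * (k : ℂ) * (d x : ℂ)) x := ((hrd x hx).ofReal_comp).const_mul _
      have h3 := h2.cexp
      have h4 := h3.congr_of_eventuallyEq (Filter.Eventually.of_forall fun y => (hu y))
      exact h4.congr_deriv (by rw [hu x]; ring)
    have heq : deriv u =ᶠ[nhds r] fun x => Complex.I * k * (d x : ℂ) * u x := by
      filter_upwards [IsOpen.mem_nhds isOpen_Ioi hr] with x hx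
      exact (hud x hx).deriv
    rw [heq.deriv_eq]
    have hsq : HasDerivAt (fun x => (2 * Real.sqrt x)⁻¹)
        (-(2 * (1 / (2 * Real.sqrt r))) / (2 * Real.sqrt r) ^ 2) r :=
      ((Real.hasDerivAt_sqrt hr.ne').const_mul 2).inv (by positivity)
    have hdd : HasDerivAt d
        (0 - ξ / k ^ 2 * (-(2 * (1 / (2 * Real.sqrt r))) / (2 * Real.sqrt r) ^ 2)
          - ξ ^ 2 / (8 * k ^ 4) * (-(r ^ 2)⁻¹)) r :=
      ((hasDerivAt_const r (1:ℝ)).sub (hsq.const_mul _)).sub ((hasDerivAt_inv hr.ne').const_mul _)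
    set e : ℝ := 0 - ξ / k ^ 2 * (-(2 * (1 / (2 * Real.sqrt r))) / (2 * Real.sqrt r) ^ 2)
          - ξ ^ 2 / (8 * k ^ 4) * (-(r ^ 2)⁻¹) with he
    have hprod : HasDerivAt (fun x => Complex.I * k * (d x : ℂ) * u x)
        (Complex.I * k * (e : ℂ) * u r
          + Complex.I * k * (d r : ℂ) * (Complex.I * k * (d r : ℂ) * u r)) r :=
      ((hdd.ofReal_comp).const_mul _).mul (hud r hr)
    rw [hprod.deriv]
    have hco : Complex.I * k * (e : ℂ)
        + Complex.I * k * (d r : ℂ) * (Complex.I * k * (d r : ℂ))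
        + ((k : ℂ) ^ 2 - (ξ : ℂ) / (Real.sqrt r : ℂ))
        = c1 * ((Real.sqrt r : ℂ))⁻¹ ^ 3 + c2 * ((r : ℂ))⁻¹ ^ 2 := by
      have hs2 : ((Real.sqrt r : ℂ)) ^ 2 = (r : ℂ) := by
        norm_cast; exact Real.sq_sqrt hr.le
      have hs0c : ((Real.sqrt r : ℂ)) ≠ 0 := by exact_mod_cast hs0
      have hr0c : ((r : ℂ)) ≠ 0 := by exact_mod_cast hr.ne'
      have hk0c : ((k : ℂ)) ≠ 0 := by exact_mod_cast hk0
      set t : ℂ := ((Real.sqrt r : ℂ))⁻¹ with ht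
      have hdrc : ((d r : ℝ) : ℂ) = 1 - (ξ : ℂ) / (2 * k ^ 2) * t - (ξ : ℂ) ^ 2 / (8 * k ^ 4) * t ^ 2 := by
        rw [hd, ht]
        push_cast
        rw [← hs2]
        field_simp
      have hec : ((e : ℝ) : ℂ) = (ξ : ℂ) / (4 * k ^ 2) * t ^ 3 + (ξ : ℂ) ^ 2 / (8 * k ^ 4) * t ^ 4 := by
        rw [he, ht]
        push_cast
        rw [← hs2]
        field_simp
        ring
      have hrt : ((r : ℂ))⁻¹ = t ^ 2 := by rw [← hs2, ht, ← inv_pow]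
      have hst : (ξ : ℂ) / (Real.sqrt r : ℂ) = (ξ : ℂ) * t := by rw [ht, div_eq_mul_inv]
      rw [hdrc, hec, hc1, hc2, hrt, hst]
      have hI : (Complex.I) ^ 2 = -1 := Complex.I_sq
      clear_value t d e c1 c2
      have h18 : ((k:ℂ)) ^ 18 * ((k:ℂ))⁻¹ ^ 18 = 1 := by
        rw [← mul_pow, mul_inv_cancel₀ hk0c, one_pow]
      field_simp [hk0c]
      ring_nf
      simp only [Complex.I_sq]
      ring
    linear_combination (u r) * hco
  · rw [Asymptotics.isBigO_iff]
    refine ⟨‖c1‖ + ‖c2‖, ?_⟩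
    filter_upwards [eventually_ge_atTop 1] with r hr1
    have hr0 : (0:ℝ) < r := lt_of_lt_of_le one_pos hr1
    have h1 : ‖((Real.sqrt r : ℂ))⁻¹ ^ 3‖ = r ^ (-(3:ℝ)/2) := by
      rw [norm_pow, norm_inv, Complex.norm_real, Real.norm_eq_abs,
        _root_.abs_of_nonneg (Real.sqrt_nonneg r), Real.sqrt_eq_rpow,
        ← Real.rpow_neg_one (r ^ ((1:ℝ)/2)), ← Real.rpow_natCast ((r ^ ((1:ℝ)/2)) ^ (-1:ℝ)) 3,
        ← Real.rpow_mul hr0.le, ← Real.rpow_mul hr0.le]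
      norm_num
    have h2 : ‖((r : ℂ))⁻¹ ^ 2‖ = r ^ (-(2:ℝ)) := by
      rw [norm_pow, norm_inv, Complex.norm_real, Real.norm_eq_abs, _root_.abs_of_nonneg hr0.le,
        ← Real.rpow_neg_one r, ← Real.rpow_natCast (r ^ (-1:ℝ)) 2, ← Real.rpow_mul hr0.le]
      norm_num
    have h3 : r ^ (-(2:ℝ)) ≤ r ^ (-(3:ℝ)/2) :=
      Real.rpow_le_rpow_of_exponent_le hr1 (by norm_num)
    have h4 : ‖r ^ (-(3:ℝ)/2)‖ = r ^ (-(3:ℝ)/2) := by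
      rw [Real.norm_eq_abs, _root_.abs_of_nonneg (Real.rpow_nonneg hr0.le _)]
    calc ‖c1 * ((Real.sqrt r : ℂ))⁻¹ ^ 3 + c2 * ((r : ℂ))⁻¹ ^ 2‖
        ≤ ‖c1 * ((Real.sqrt r : ℂ))⁻¹ ^ 3‖ + ‖c2 * ((r : ℂ))⁻¹ ^ 2‖ := norm_add_le _ _
      _ = ‖c1‖ * r ^ (-(3:ℝ)/2) + ‖c2‖ * r ^ (-(2:ℝ)) := by rw [norm_mul, norm_mul, h1, h2]
      _ ≤ ‖c1‖ * r ^ (-(3:ℝ)/2) + ‖c2‖ * r ^ (-(3:ℝ)/2) := by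
          gcongr
      _ = (‖c1‖ + ‖c2‖) * ‖r ^ (-(3:ℝ)/2)‖ := by rw [h4]; ring
end

section
/- Let V(r) = ζ r⁶ with ζ > 0 and k > 0. Then with r_* = (ζ^{1/2}/(4k)) r⁴ + (1/(4k)) ln(ζ r⁶), the function u(r) = exp(−k r_*) = exp(−(1/4)ζ^{1/2} r⁴ − (1/4) ln(ζ r⁶)) satisfies u''(r) − ζ r⁶ u(r) + k² u(r) = g(r) u(r) where g(r)/r⁶ → 0 as r → ∞ (in fact g(r) = O(r²)). -/
open Real Filter Asymptotics

theorem r_six_potential_tortoise (ζ k : ℝ) (hζ : 0 < ζ) (hk : 0 < k)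
    (rstar : ℝ → ℝ)
    (hrstar : ∀ r, rstar r =
      Real.sqrt ζ / (4 * k) * r ^ 4 + 1 / (4 * k) * Real.log (ζ * r ^ 6))
    (u : ℝ → ℝ) (hu : ∀ r, u r = Real.exp (-(k * rstar r))) :
    ∃ g : ℝ → ℝ,
      (∀ r : ℝ, 0 < r →
        deriv (deriv u) r - ζ * r ^ 6 * u r + k ^ 2 * u r = g r * u r) ∧
      Tendsto (fun r => g r / r ^ 6) atTop (nhds 0) ∧
      g =O[atTop] fun r : ℝ => r ^ 2 := by
  have hsq : Real.sqrt ζ * Real.sqrt ζ = ζ := Real.mul_self_sqrt hζ.le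
  set s := Real.sqrt ζ with hs
  -- rewrite u
  have hu' : ∀ r, u r = Real.exp (-(s / 4 * r ^ 4 + 1 / 4 * Real.log (ζ * r ^ 6))) := by
    intro r
    rw [hu, hrstar]
    congr 1
    field_simp
  -- derivative of u for r > 0
  have hA : ∀ r : ℝ, 0 < r →
      HasDerivAt u ((-(s * r ^ 3 + 3 / (2 * r))) * u r) r := by
    intro r hr
    have hpos : 0 < ζ * r ^ 6 := by positivity
    have hlog : HasDerivAt (fun x : ℝ => Real.log (ζ * x ^ 6)) (6 / r) r := by
      have h1 : HasDerivAt (fun x : ℝ => ζ * x ^ 6) (ζ * (6 * r ^ 5)) r :=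
        (hasDerivAt_pow 6 r).const_mul ζ
      have := h1.log hpos.ne'
      convert this using 1
      field_simp
    have hφ : HasDerivAt (fun x : ℝ => s / 4 * x ^ 4 + 1 / 4 * Real.log (ζ * x ^ 6))
        (s * r ^ 3 + 3 / (2 * r)) r := by
      have h1 : HasDerivAt (fun x : ℝ => s / 4 * x ^ 4) (s / 4 * (4 * r ^ 3)) r :=
        (hasDerivAt_pow 4 r).const_mul (s / 4)
      have h2 := (hlog.const_mul (1 / 4 : ℝ))
      refine (h1.add h2).congr_deriv ?_
      ring
    have he := (hφ.neg).exp
    have : HasDerivAt u (Real.exp (-(s / 4 * r ^ 4 + 1 / 4 * Real.log (ζ * r ^ 6))) *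
        (-(s * r ^ 3 + 3 / (2 * r)))) r := by
      have : u = fun x => Real.exp (-(s / 4 * x ^ 4 + 1 / 4 * Real.log (ζ * x ^ 6))) :=
        funext hu'
      rw [this]
      simpa using he
    convert this using 1
    rw [hu' r]; ring
  -- the derivative function v on (0, ∞)
  set v : ℝ → ℝ := fun r => (-(s * r ^ 3 + 3 / (2 * r))) * u r with hv
  have hderiv_u : ∀ r : ℝ, 0 < r → deriv u r = v r := fun r hr => (hA r hr).deriv
  refine ⟨fun r => k ^ 2 + 15 / (4 * r ^ 2), ?_, ?_, ?_⟩
  · intro r hr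
    -- deriv (deriv u) r = deriv v r
    have hev : deriv u =ᶠ[nhds r] v := by
      filter_upwards [Ioi_mem_nhds hr] with x hx
      exact hderiv_u x hx
    have hd2 : deriv (deriv u) r = deriv v r := hev.deriv_eq
    -- compute deriv v r
    have hB : HasDerivAt (fun x : ℝ => -(s * x ^ 3 + 3 / (2 * x)))
        (-(3 * s * r ^ 2 - 3 / (2 * r ^ 2))) r := by
      have h1 : HasDerivAt (fun x : ℝ => s * x ^ 3) (s * (3 * r ^ 2)) r :=
        (hasDerivAt_pow 3 r).const_mul s
      have h2 : HasDerivAt (fun x : ℝ => (3 / 2 : ℝ) * x⁻¹) ((3 / 2 : ℝ) * (-(r ^ 2)⁻¹)) r :=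
        (hasDerivAt_inv hr.ne').const_mul (3 / 2 : ℝ)
      have h3 := (h1.add h2).neg
      have heq : (fun x : ℝ => -(s * x ^ 3 + 3 / (2 * x))) =
          fun x : ℝ => -(s * x ^ 3 + (3 / 2 : ℝ) * x⁻¹) := by
        funext x; congr 1; ring_nf
      rw [heq]
      refine h3.congr_deriv ?_
      ring
    have hvd : HasDerivAt v
        ((-(3 * s * r ^ 2 - 3 / (2 * r ^ 2))) * u r +
          (-(s * r ^ 3 + 3 / (2 * r))) * ((-(s * r ^ 3 + 3 / (2 * r))) * u r)) r :=
      hB.mul (hA r hr)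
    rw [hd2, hvd.deriv]
    have hrne : r ≠ 0 := hr.ne'
    rw [← hsq]
    field_simp
    ring
  · have h1 : Tendsto (fun r : ℝ => k ^ 2 * (r ^ 6)⁻¹ + (15 / 4) * (r ^ 8)⁻¹)
        atTop (nhds 0) := by
      have ha : Tendsto (fun r : ℝ => (r ^ 6)⁻¹) atTop (nhds 0) :=
        tendsto_inv_atTop_zero.comp (tendsto_pow_atTop (n := 6) (by norm_num))
      have hb : Tendsto (fun r : ℝ => (r ^ 8)⁻¹) atTop (nhds 0) :=
        tendsto_inv_atTop_zero.comp (tendsto_pow_atTop (n := 8) (by norm_num))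
      have := (ha.const_mul (k ^ 2)).add (hb.const_mul (15 / 4 : ℝ))
      simpa using this
    refine Tendsto.congr' ?_ h1
    filter_upwards [eventually_gt_atTop (0 : ℝ)] with r hr
    have : r ≠ 0 := hr.ne'
    field_simp
  · rw [Asymptotics.isBigO_iff]
    refine ⟨k ^ 2 + 4, ?_⟩
    filter_upwards [eventually_ge_atTop (1 : ℝ)] with r hr
    have hr0 : 0 < r := lt_of_lt_of_le one_pos hr
    have h2 : (1 : ℝ) ≤ r ^ 2 := one_le_pow₀ hr
    have hg : 0 ≤ k ^ 2 + 15 / (4 * r ^ 2) := by positivity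
    rw [Real.norm_eq_abs, Real.norm_eq_abs, abs_of_nonneg hg,
      abs_of_nonneg (by positivity : (0:ℝ) ≤ r ^ 2)]
    have : 15 / (4 * r ^ 2) ≤ 4 := by
      rw [div_le_iff₀ (by positivity)]
      nlinarith
    nlinarith
end
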